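/- For integers k ≥ 1 and ℓ₁, ℓ₂ ≥ 0 with ℓ₁ + ℓ₂ < k, the alternating sum Σ_{i=0}^{k} (−1)^i · C(k−ℓ₁, i) · C(k−ℓ₂, k−i) / C(k, i) equals 0. -/

import Mathlib

open scoped BigOperators

lemma alt_choose_sum_q (d : ℕ) (hd : d ≠ 0) :
    ∑ i ∈ Finset.range (d + 1), (-1 : ℚ) ^ i * (Nat.choose d i) = 0 := by
  have := Int.alternating_sum_range_choose_of_ne hd
  have : ((∑ i ∈ Finset.range (d + 1), (-1 : ℤ) ^ i * (Nat.choose d i) : ℤ) : ℚ) = 0 := by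
    rw [this]; norm_num
  push_cast at this
  convert this using 2

lemma aux_sum (n m K : ℕ) (hm : m < n) (hK : n ≤ K) :
    ∑ j ∈ Finset.range (K + 1), (-1 : ℚ) ^ j * (Nat.choose n j) * (Nat.choose j m) = 0 := by
  have step1 : ∑ j ∈ Finset.range (K + 1), (-1 : ℚ) ^ j * (Nat.choose n j) * (Nat.choose j m)
      = ∑ j ∈ Finset.range (n + 1), (-1 : ℚ) ^ j * (Nat.choose n j) * (Nat.choose j m) := by
    refine (Finset.sum_subset ?_ ?_).symm
    · exact Finset.range_subset_range.2 (by omega)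
    · intro x _ hx
      have : n < x := by simp [Finset.mem_range] at hx ⊢; omega
      rw [Nat.choose_eq_zero_of_lt this]; simp
  rw [step1]
  have step2 : ∑ j ∈ Finset.range (n + 1), (-1 : ℚ) ^ j * (Nat.choose n j) * (Nat.choose j m)
      = ∑ j ∈ Finset.Ico m (n + 1), (-1 : ℚ) ^ j * (Nat.choose n j) * (Nat.choose j m) := by
    rw [Finset.range_eq_Ico]
    refine (Finset.sum_subset ?_ ?_).symm
    · exact Finset.Ico_subset_Ico (by omega) le_rfl
    · intro x hx hx'
      have : x < m := by simp [Finset.mem_Ico] at hx hx'; omega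
      rw [Nat.choose_eq_zero_of_lt this]; simp
  rw [step2, Finset.sum_Ico_eq_sum_range]
  have hnm : n + 1 - m = (n - m) + 1 := by omega
  rw [hnm]
  have key : ∀ i ∈ Finset.range ((n - m) + 1),
      (-1 : ℚ) ^ (m + i) * (Nat.choose n (m + i)) * (Nat.choose (m + i) m)
      = ((-1 : ℚ) ^ m * (Nat.choose n m)) * ((-1 : ℚ) ^ i * (Nat.choose (n - m) i)) := by
    intro i hi
    simp only [Finset.mem_range] at hi
    have h1 : m + i ≤ n := by omega
    have h2 : Nat.choose n (m + i) * Nat.choose (m + i) m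
        = Nat.choose n m * Nat.choose (n - m) i := by
      have := Nat.choose_mul (n := n) (Nat.le_add_right m i)
      simpa [Nat.add_sub_cancel_left] using this
    have h2q : ((Nat.choose n (m + i) : ℚ)) * (Nat.choose (m + i) m)
        = (Nat.choose n m) * (Nat.choose (n - m) i) := by exact_mod_cast h2
    rw [pow_add]
    ring_nf
    ring_nf at h2q
    linear_combination ((-1:ℚ)^m * (-1:ℚ)^i) * h2q
  rw [Finset.sum_congr rfl key, ← Finset.mul_sum,
    alt_choose_sum_q (n - m) (by omega), mul_zero]

lemma nat_key (k i m : ℕ) (hi : i ≤ k) (hmk : m ≤ k) :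
    Nat.choose k i * Nat.choose (k - i) m = Nat.choose k m * Nat.choose (k - m) i := by
  by_cases hm : i + m ≤ k
  · have h1 := Nat.choose_mul (n := k) (Nat.le_add_right i m)
    have h2 := Nat.choose_mul (n := k) (Nat.le_add_left m i)
    rw [Nat.add_sub_cancel_left] at h1
    rw [Nat.add_sub_cancel] at h2
    -- h1 : choose k (i+m) * choose (i+m) i = choose k i * choose (k-i) m
    -- h2 : choose k (i+m) * choose (i+m) m = choose k m * choose (k-m) i
    rw [← h1, ← h2, Nat.choose_symm_add.symm]
  · rw [Nat.choose_eq_zero_of_lt (show k - i < m by omega),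
      Nat.choose_eq_zero_of_lt (show k - m < i by omega)]
    simp

/-- For `k ≥ 1` and `ℓ₁ + ℓ₂ < k`, the alternating sum
`Σ_{i=0}^{k} (−1)^i · C(k−ℓ₁,i) · C(k−ℓ₂,k−i) / C(k,i)` vanishes. -/
theorem stmt_12 (k ℓ₁ ℓ₂ : ℕ) (hk : 1 ≤ k) (h : ℓ₁ + ℓ₂ < k) :
    ∑ i ∈ Finset.range (k + 1),
      (-1 : ℚ) ^ i * (Nat.choose (k - ℓ₁) i) * (Nat.choose (k - ℓ₂) (k - i))
        / (Nat.choose k i) = 0 := by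
  have hl1 : ℓ₁ ≤ k := by omega
  have hck : (Nat.choose k ℓ₁ : ℚ) ≠ 0 := by
    exact_mod_cast Nat.choose_pos hl1 |>.ne'
  have step : ∀ i ∈ Finset.range (k + 1),
      (-1 : ℚ) ^ i * (Nat.choose (k - ℓ₁) i) * (Nat.choose (k - ℓ₂) (k - i))
        / (Nat.choose k i)
      = ((-1 : ℚ) ^ i * (Nat.choose (k - i) ℓ₁) * (Nat.choose (k - ℓ₂) (k - i)))
        / (Nat.choose k ℓ₁) := by
    intro i hi
    simp only [Finset.mem_range] at hi
    have hik : i ≤ k := by omega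
    have hcki : (Nat.choose k i : ℚ) ≠ 0 := by
      exact_mod_cast Nat.choose_pos hik |>.ne'
    have key : (Nat.choose k i : ℚ) * Nat.choose (k - i) ℓ₁
        = Nat.choose k ℓ₁ * Nat.choose (k - ℓ₁) i := by
      exact_mod_cast nat_key k i ℓ₁ hik hl1
    field_simp
    ring_nf
    ring_nf at key
    linear_combination (-(Nat.choose (k - ℓ₂) (k - i) : ℚ)) * key
  rw [Finset.sum_congr rfl step, ← Finset.sum_div]
  rw [div_eq_zero_iff]
  left
  have reflect := Finset.sum_range_reflect
    (fun j => (-1 : ℚ) ^ (k - j) * (Nat.choose j ℓ₁) * (Nat.choose (k - ℓ₂) j)) (k + 1)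
  simp only [Nat.add_sub_cancel] at reflect
  have eq1 : ∑ i ∈ Finset.range (k + 1),
      (-1 : ℚ) ^ i * (Nat.choose (k - i) ℓ₁) * (Nat.choose (k - ℓ₂) (k - i))
      = ∑ j ∈ Finset.range (k + 1),
      (-1 : ℚ) ^ (k - j) * (Nat.choose j ℓ₁) * (Nat.choose (k - ℓ₂) j) := by
    rw [← reflect]
    refine Finset.sum_congr rfl ?_
    intro i hi
    simp only [Finset.mem_range] at hi
    have : k - (k - i) = i := by omega
    rw [this]
  rw [eq1]
  have eq2 : ∑ j ∈ Finset.range (k + 1),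
      (-1 : ℚ) ^ (k - j) * (Nat.choose j ℓ₁) * (Nat.choose (k - ℓ₂) j)
      = (-1 : ℚ) ^ k * ∑ j ∈ Finset.range (k + 1),
      (-1 : ℚ) ^ j * (Nat.choose (k - ℓ₂) j) * (Nat.choose j ℓ₁) := by
    rw [Finset.mul_sum]
    refine Finset.sum_congr rfl ?_
    intro j hj
    simp only [Finset.mem_range] at hj
    have hjk : j ≤ k := by omega
    have hsign : (-1 : ℚ) ^ (k - j) = (-1 : ℚ) ^ k * (-1 : ℚ) ^ j := by
      have : (-1 : ℚ) ^ (k - j) * (-1 : ℚ) ^ j = (-1 : ℚ) ^ k := by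
        rw [← pow_add]; congr 1; omega
      have hsq : ((-1 : ℚ) ^ j) * ((-1 : ℚ) ^ j) = 1 := by
        rw [← pow_add, Even.neg_one_pow ⟨j, rfl⟩]
      calc (-1 : ℚ) ^ (k - j) = (-1 : ℚ) ^ (k - j) * (((-1 : ℚ) ^ j) * ((-1 : ℚ) ^ j)) := by
            rw [hsq, mul_one]
        _ = (-1 : ℚ) ^ k * (-1 : ℚ) ^ j := by rw [← mul_assoc, this]
    rw [hsign]; ring
  rw [eq2, aux_sum (k - ℓ₂) ℓ₁ k (by omega) (by omega), mul_zero]
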